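/- Let G be a graph of order n ≥ 2 and let H be any graph with root vertex v and at least two vertices. Then n·(γ_R(H) − 1) + γ(G) ≤ γ_R(G∘H) ≤ n·γ_R(H). -/

import Mathlib

open Finset
open scoped Classical

/-- `S` is a dominating set of `G`: every vertex outside `S` has a neighbor in `S`. -/
def IsDomSet {α : Type*} (G : SimpleGraph α) (S : Set α) : Prop :=
  ∀ v ∉ S, ∃ u ∈ S, G.Adj u v

/-- The domination number `γ(G)`. -/
noncomputable def domNum {α : Type*} (G : SimpleGraph α) [Fintype α] : ℕ :=
  sInf {k | ∃ S : Finset α, IsDomSet G ↑S ∧ S.card = k}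

/-- The rooted product `G ∘ H` with root `v` of `H`: one copy of `H` for each vertex of `G`,
identifying the root of the `a`-th copy with the vertex `a` of `G`. -/
def rootedProd {α β : Type*} (G : SimpleGraph α) (H : SimpleGraph β) (v : β) :
    SimpleGraph (α × β) where
  Adj x y := (x.2 = v ∧ y.2 = v ∧ G.Adj x.1 y.1) ∨ (x.1 = y.1 ∧ H.Adj x.2 y.2)
  symm := by
    constructor
    rintro x y (⟨h1, h2, h3⟩ | ⟨h1, h2⟩)
    · exact Or.inl ⟨h2, h1, h3.symm⟩
    · exact Or.inr ⟨h1.symm, h2.symm⟩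
  loopless := by
    constructor
    rintro x (⟨_, _, h⟩ | ⟨_, h⟩)
    · exact G.loopless.irrefl _ h
    · exact H.loopless.irrefl _ h

/-- The graph `G - v` obtained by deleting the vertex `v`. -/
def deleteVert {α : Type*} (G : SimpleGraph α) (v : α) : SimpleGraph {u : α // u ≠ v} :=
  SimpleGraph.comap Subtype.val G

/-- The graph `G - A` obtained by deleting a set `A` of vertices. -/
def deleteSet {α : Type*} (G : SimpleGraph α) (A : Set α) : SimpleGraph {u : α // u ∉ A} :=
  SimpleGraph.comap Subtype.val G

/-- `f` is a Roman dominating function on `G`. -/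
def IsRDF {α : Type*} (G : SimpleGraph α) (f : α → ℕ) : Prop :=
  (∀ u, f u ≤ 2) ∧ ∀ u, f u = 0 → ∃ w, G.Adj u w ∧ f w = 2

/-- The Roman domination number `γ_R(G)`. -/
noncomputable def romanDomNum {α : Type*} (G : SimpleGraph α) [Fintype α] : ℕ :=
  sInf {k | ∃ f : α → ℕ, IsRDF G f ∧ ∑ u, f u = k}

/-- `S` is an independent set of `G`. -/
def IsIndep {α : Type*} (G : SimpleGraph α) (S : Set α) : Prop :=
  ∀ u ∈ S, ∀ w ∈ S, ¬ G.Adj u w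

/-- The independence number `α(G)`. -/
noncomputable def indepNum {α : Type*} (G : SimpleGraph α) [Fintype α] : ℕ :=
  sSup {k | ∃ S : Finset α, IsIndep G ↑S ∧ S.card = k}

/-- The independent domination number `i(G)`. -/
noncomputable def indepDomNum {α : Type*} (G : SimpleGraph α) [Fintype α] : ℕ :=
  sInf {k | ∃ S : Finset α, IsDomSet G ↑S ∧ IsIndep G ↑S ∧ S.card = k}

/-- `S` is a connected dominating set of `G`. -/
def IsConnDomSet {α : Type*} (G : SimpleGraph α) (S : Set α) : Prop :=
  IsDomSet G S ∧ (G.induce S).Connected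

/-- The connected domination number `γ_c(G)`. -/
noncomputable def connDomNum {α : Type*} (G : SimpleGraph α) [Fintype α] : ℕ :=
  sInf {k | ∃ S : Finset α, IsConnDomSet G ↑S ∧ S.card = k}

/-- `D` is a super dominating set of `G`: every `w ∉ D` has a neighbor `u ∈ D` with
`N(u) ⊆ D ∪ {w}`. -/
def IsSuperDomSet {α : Type*} (G : SimpleGraph α) (D : Set α) : Prop :=
  ∀ w ∉ D, ∃ u ∈ D, G.Adj u w ∧ ∀ x, G.Adj u x → x ∈ D ∪ {w}

/-- The super domination number `γ_sp(G)`. -/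
noncomputable def superDomNum {α : Type*} (G : SimpleGraph α) [Fintype α] : ℕ :=
  sInf {k | ∃ S : Finset α, IsSuperDomSet G ↑S ∧ S.card = k}

/-- The number of end vertices (vertices of degree one) of `G`, denoted `n₁(G)`. -/
noncomputable def endVertCount {α : Type*} (G : SimpleGraph α) [Fintype α] : ℕ :=
  Nat.card {u : α // G.degree u = 1}

lemma exists_optimal_RDF {α : Type*} [Fintype α] (G : SimpleGraph α) :
    ∃ f : α → ℕ, IsRDF G f ∧ ∑ u, f u = romanDomNum G := by
  have hne : {k | ∃ f : α → ℕ, IsRDF G f ∧ ∑ u, f u = k}.Nonempty :=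
    ⟨_, fun _ => 2, ⟨fun _ => le_refl 2, fun u h => by simp at h⟩, rfl⟩
  exact Nat.sInf_mem hne

lemma romanDomNum_le {α : Type*} [Fintype α] (G : SimpleGraph α) (f : α → ℕ)
    (hf : IsRDF G f) : romanDomNum G ≤ ∑ u, f u :=
  Nat.sInf_le ⟨f, hf, rfl⟩

lemma domNum_le {α : Type*} [Fintype α] (G : SimpleGraph α) (S : Finset α)
    (hS : IsDomSet G ↑S) : domNum G ≤ S.card :=
  Nat.sInf_le ⟨S, hS, rfl⟩

lemma romanDomNum_pos {α : Type*} [Fintype α] [Nonempty α] (G : SimpleGraph α) :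
    1 ≤ romanDomNum G := by
  obtain ⟨f, hf, hsum⟩ := exists_optimal_RDF G
  by_contra h
  push_neg at h
  have h0 : romanDomNum G = 0 := by omega
  rw [h0] at hsum
  have hall : ∀ u, f u = 0 := by
    intro u
    have := Finset.sum_eq_zero_iff.mp hsum u (Finset.mem_univ u)
    exact this
  obtain ⟨w, _, hw2⟩ := hf.2 (Classical.arbitrary α) (hall _)
  rw [hall w] at hw2
  exact absurd hw2 (by norm_num)

/-- `n·(γ_R(H) − 1) + γ(G) ≤ γ_R(G∘H) ≤ n·γ_R(H)`. -/
theorem stmt4 {α β : Type*} [Fintype α] [Fintype β]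
    (G : SimpleGraph α) (H : SimpleGraph β) (v : β)
    (hn : 2 ≤ Fintype.card α) (hm : 2 ≤ Fintype.card β) :
    Fintype.card α * (romanDomNum H - 1) + domNum G ≤ romanDomNum (rootedProd G H v) ∧
    romanDomNum (rootedProd G H v) ≤ Fintype.card α * romanDomNum H := by
  classical
  have hβ : Nonempty β := Fintype.card_pos_iff.mp (by omega)
  constructor
  · -- lower bound
    obtain ⟨F, hF, hsum⟩ := exists_optimal_RDF (rootedProd G H v)
    set r := romanDomNum H with hr
    have hr1 : 1 ≤ r := romanDomNum_pos H
    -- "bad" copies: root has value 0 and no internal witness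
    set P : α → Prop := fun a => F (a, v) = 0 ∧ ¬ ∃ w, H.Adj v w ∧ F (a, w) = 2 with hP
    set D : Finset α := Finset.univ.filter (fun a => ¬ P a) with hD
    -- D is a dominating set of G
    have hDdom : IsDomSet G ↑D := by
      intro a ha
      have hPa : P a := by
        by_contra hc
        exact ha (by simp [hD, hc])
      obtain ⟨w, hadj, hw2⟩ := hF.2 (a, v) hPa.1
      rcases hadj with ⟨_, h2, h3⟩ | ⟨h1, h2⟩
      · refine ⟨w.1, ?_, h3.symm⟩
        have : ¬ P w.1 := by
          intro hPw
          have : F (w.1, v) = 2 := by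
            have : (w.1, v) = w := by
              rw [← h2]
            rw [this]; exact hw2
          rw [hPw.1] at this; exact absurd this (by norm_num)
        simp [hD, this]
      · exact absurd ⟨w.2, h2, by have h1' : a = w.1 := h1; rw [h1']; exact hw2⟩ hPa.2
    -- per-copy bound
    have hper : ∀ a : α, (r - 1) + (if P a then 0 else 1) ≤ ∑ b, F (a, b) := by
      intro a
      by_cases hPa : P a
      · rw [if_pos hPa, add_zero]
        -- modify F at root to get an RDF of H
        set g : β → ℕ := fun b => if b = v then 1 else F (a, b) with hg
        have hgRDF : IsRDF H g := by
          constructor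
          · intro b
            by_cases hb : b = v
            · simp [hg, hb]
            · simpa [hg, hb] using hF.1 (a, b)
          · intro b hb
            have hbv : b ≠ v := by
              intro h; rw [h] at hb; simp [hg] at hb
            have hFb : F (a, b) = 0 := by simpa [hg, hbv] using hb
            obtain ⟨w, hadj, hw2⟩ := hF.2 (a, b) hFb
            rcases hadj with ⟨h1, _, _⟩ | ⟨h1, h2⟩
            · exact absurd h1 hbv
            · have hw2' : F (a, w.2) = 2 := by have h1' : a = w.1 := h1; rw [h1']; exact hw2
              have hwv : w.2 ≠ v := by
                intro h; rw [h] at hw2'; rw [hPa.1] at hw2'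
                exact absurd hw2' (by norm_num)
              exact ⟨w.2, h2, by simp [hg, hwv, hw2']⟩
        have hle : r ≤ ∑ b, g b := romanDomNum_le H g hgRDF
        have heq : ∑ b, g b = (∑ b, F (a, b)) + 1 := by
          rw [← Finset.add_sum_erase Finset.univ g (Finset.mem_univ v),
              ← Finset.add_sum_erase Finset.univ (fun b => F (a, b)) (Finset.mem_univ v)]
          have h1 : g v = 1 := by simp [hg]
          have h2 : F (a, v) = 0 := hPa.1
          have h3 : ∑ b ∈ Finset.univ.erase v, g b
              = ∑ b ∈ Finset.univ.erase v, F (a, b) := by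
            refine Finset.sum_congr rfl fun b hb => ?_
            have : b ≠ v := Finset.ne_of_mem_erase hb
            simp [hg, this]
          rw [h1, h2, h3]; ring
        omega
      · rw [if_neg hPa]
        -- the restriction is an RDF of H
        have hgRDF : IsRDF H (fun b => F (a, b)) := by
          constructor
          · intro b; exact hF.1 _
          · intro b hb
            by_cases hbv : b = v
            · rw [hbv] at hb ⊢
              simp only [hP] at hPa
              push_neg at hPa
              obtain ⟨w, hw1, hw2⟩ := hPa (by simpa using hb)
              exact ⟨w, hw1, hw2⟩
            · obtain ⟨w, hadj, hw2⟩ := hF.2 (a, b) hb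
              rcases hadj with ⟨h1, _, _⟩ | ⟨h1, h2⟩
              · exact absurd h1 hbv
              · exact ⟨w.2, h2, by have h1' : a = w.1 := h1; rw [h1']; exact hw2⟩
        have hle : r ≤ ∑ b, F (a, b) := romanDomNum_le H _ hgRDF
        omega
    have htotal : ∑ a : α, ((r - 1) + (if P a then 0 else 1)) ≤ romanDomNum (rootedProd G H v) := by
      rw [← hsum, Fintype.sum_prod_type]
      exact Finset.sum_le_sum fun a _ => hper a
    have hsplit : ∑ a : α, ((r - 1) + (if P a then 0 else 1))
        = Fintype.card α * (r - 1) + D.card := by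
      rw [Finset.sum_add_distrib, Finset.sum_const, Finset.card_univ, smul_eq_mul]
      congr 1
      rw [hD, Finset.card_filter]
      exact Finset.sum_congr rfl fun a _ => by by_cases h : P a <;> simp [h]
    have hdom : domNum G ≤ D.card := domNum_le G D hDdom
    omega
  · -- upper bound
    obtain ⟨f, hf, hsum⟩ := exists_optimal_RDF H
    have hFRDF : IsRDF (rootedProd G H v) (fun x : α × β => f x.2) := by
      constructor
      · intro x; exact hf.1 _
      · intro x hx
        obtain ⟨w, hw, hw2⟩ := hf.2 x.2 hx
        exact ⟨(x.1, w), Or.inr ⟨rfl, hw⟩, hw2⟩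
    have := romanDomNum_le (rootedProd G H v) _ hFRDF
    calc romanDomNum (rootedProd G H v) ≤ ∑ x : α × β, f x.2 := this
      _ = Fintype.card α * romanDomNum H := by
          rw [Fintype.sum_prod_type]
          simp [Finset.card_univ, hsum]
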